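/- If P is a generalized billiard trajectory of a convex body C in ℝ^d (d ≥ 2) with vertices p_1, …, p_n, then there exists a subset S of {p_1, …, p_n} with at most d+1 elements such that S cannot be translated into the interior of C. -/
import Mathlib


open scoped RealInnerProductSpace

noncomputable section

/-- A closed polygonal path in `ℝ^d` with `n` sides, encoded as an `n`-periodic
sequence of vertices indexed by `ℤ`, with consecutive vertices distinct. -/
def IsClosedPolygonalPath {d : ℕ} (n : ℕ) (p : ℤ → EuclideanSpace ℝ (Fin d)) : Prop :=
  2 ≤ n ∧ (∀ i : ℤ, p (i + (n : ℤ)) = p i) ∧ (∀ i : ℤ, p i ≠ p (i + 1))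

/-- The (non-normalized) inner angle bisector direction of the path `p` at the vertex `p i`. -/
def bisector {d : ℕ} (p : ℤ → EuclideanSpace ℝ (Fin d)) (i : ℤ) : EuclideanSpace ℝ (Fin d) :=
  ‖p (i - 1) - p i‖⁻¹ • (p (i - 1) - p i) + ‖p (i + 1) - p i‖⁻¹ • (p (i + 1) - p i)

/-- `p` is an `n`-periodic generalized billiard trajectory of `C`: all vertices lie on the
boundary of `C` and at each vertex the inner angle bisector is a nonzero inward normal of a
hyperplane supporting `C` at that vertex. -/
def IsGenBilliardTraj {d : ℕ} (C : Set (EuclideanSpace ℝ (Fin d))) (n : ℕ)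
    (p : ℤ → EuclideanSpace ℝ (Fin d)) : Prop :=
  IsClosedPolygonalPath n p ∧
    ∀ i : ℤ, p i ∈ frontier C ∧ bisector p i ≠ 0 ∧
      ∀ q ∈ C, 0 ≤ ⟪bisector p i, q - p i⟫

/-- The length of the closed polygonal path with vertices `p 0, p 1, …, p (n-1)`. -/
def pathLength {d : ℕ} (n : ℕ) (p : ℤ → EuclideanSpace ℝ (Fin d)) : ℝ :=
  ∑ i ∈ Finset.range n, ‖p ((i : ℤ) + 1) - p (i : ℤ)‖

/-- Strict positivity of the supporting inequality on interior points. -/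
lemma strict_support {d : ℕ} {C : Set (EuclideanSpace ℝ (Fin d))}
    {v x q : EuclideanSpace ℝ (Fin d)} (hv : v ≠ 0)
    (hsupp : ∀ r ∈ C, 0 ≤ ⟪v, r - x⟫) (hq : q ∈ interior C) :
    0 < ⟪v, q - x⟫ := by
  obtain ⟨ε, hε, hball⟩ := Metric.isOpen_iff.1 isOpen_interior q hq
  have hvnorm : 0 < ‖v‖ := norm_pos_iff.2 hv
  set δ : ℝ := ε / (2 * ‖v‖) with hδdef
  have hδ : 0 < δ := by positivity
  have hr : q - δ • v ∈ C := by
    apply interior_subset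
    apply hball
    rw [Metric.mem_ball, dist_eq_norm]
    have : q - δ • v - q = -(δ • v) := by abel
    rw [this, norm_neg, norm_smul, Real.norm_eq_abs, abs_of_pos hδ, hδdef]
    rw [div_mul_eq_mul_div, div_lt_iff₀ (by positivity)]
    nlinarith
  have h := hsupp _ hr
  have hexp : ⟪v, q - δ • v - x⟫ = ⟪v, q - x⟫ - δ * ‖v‖ ^ 2 := by
    have : q - δ • v - x = (q - x) - δ • v := by abel
    rw [this, inner_sub_right, real_inner_smul_right, real_inner_self_eq_norm_sq]
  rw [hexp] at h
  nlinarith [mul_pos hδ (pow_pos hvnorm 2)]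

/-- If `p` is a generalized billiard trajectory of a convex body `C` in `ℝ^d`, then some
subset of its vertex set of at most `d + 1` elements cannot be translated into
the interior of `C`. -/
theorem exists_small_subset_not_translatable
    {d : ℕ} (hd : 2 ≤ d) (C : Set (EuclideanSpace ℝ (Fin d)))
    (hCc : IsCompact C) (hCconv : Convex ℝ C) (hCint : (interior C).Nonempty)
    (n : ℕ) (p : ℤ → EuclideanSpace ℝ (Fin d)) (hp : IsGenBilliardTraj C n p) :
    ∃ S : Finset (EuclideanSpace ℝ (Fin d)), S.card ≤ d + 1 ∧ ↑S ⊆ Set.range p ∧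
      ¬ ∃ t : EuclideanSpace ℝ (Fin d), ∀ x ∈ S, t + x ∈ interior C := by
  classical
  obtain ⟨⟨hn2, hper, hne⟩, hvert⟩ := hp
  -- unit edge vectors
  set u : ℤ → EuclideanSpace ℝ (Fin d) :=
    fun i => ‖p (i + 1) - p i‖⁻¹ • (p (i + 1) - p i) with hu
  have hbu : ∀ i : ℤ, bisector p i = u i - u (i - 1) := by
    intro i
    have h1 : (i - 1) + 1 = i := by ring
    have h2 : ‖p (i - 1) - p i‖⁻¹ • (p (i - 1) - p i)
        = -(‖p i - p (i - 1)‖⁻¹ • (p i - p (i - 1))) := by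
      rw [norm_sub_rev, ← neg_sub (p i) (p (i - 1)), smul_neg]
    simp only [bisector, hu, h1, h2]
    abel
  -- periodicity of u
  have huper : u (-1 + (n : ℤ)) = u (-1) := by
    simp only [hu]
    have h1 : -1 + (n : ℤ) + 1 = 0 + (n : ℤ) := by ring
    have h2 : (-1 : ℤ) + 1 = 0 := by ring
    rw [h1, h2, hper 0, hper (-1)]
  -- sum of bisectors vanishes
  have hnpos : (0 : ℝ) < n := by positivity
  have hsum : ∑ i ∈ Finset.range n, bisector p (i : ℤ) = 0 := by
    have htel := Finset.sum_range_sub (fun k : ℕ => u ((k : ℤ) - 1)) n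
    have heq : ∀ i ∈ Finset.range n, bisector p (i : ℤ) =
        u (((i : ℕ) + 1 : ℕ) - 1 : ℤ) - u ((i : ℤ) - 1) := by
      intro i _
      rw [hbu]
      congr 2
      push_cast
      ring
    rw [Finset.sum_congr rfl heq, htel]
    have h1 : ((n : ℤ) - 1) = -1 + (n : ℤ) := by ring
    have h2 : ((0 : ℕ) : ℤ) - 1 = -1 := by ring
    rw [h2, h1, huper, sub_self]
  -- 0 is in the convex hull of the bisectors
  have h0 : (0 : EuclideanSpace ℝ (Fin d)) ∈
      convexHull ℝ (Set.range fun i : ℤ => bisector p i) := by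
    have hmem := Finset.centerMass_mem_convexHull (Finset.range n)
      (w := fun _ : ℕ => (1 : ℝ)) (z := fun i : ℕ => bisector p (i : ℤ))
      (s := Set.range fun i : ℤ => bisector p i)
      (fun _ _ => zero_le_one)
      (by simp [hnpos])
      (fun i _ => Set.mem_range.2 ⟨(i : ℤ), rfl⟩)
    rwa [Finset.centerMass, show (∑ _i ∈ Finset.range n, (1:ℝ)) = n by simp,
      show (∑ i ∈ Finset.range n, (1:ℝ) • bisector p (i : ℤ)) = 0 by simpa using hsum,
      smul_zero] at hmem
  rw [convexHull_eq_union] at h0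
  simp only [Set.mem_iUnion] at h0
  obtain ⟨t, hts, hai, h0t⟩ := h0
  -- cardinality bound
  have hcard : t.card ≤ d + 1 := by
    have hb := hai.card_le_finrank_succ (k := ℝ)
    rw [Fintype.card_coe] at hb
    refine hb.trans ?_
    have h1 : Module.finrank ℝ (vectorSpan ℝ
        (Set.range ((↑) : t → EuclideanSpace ℝ (Fin d)))) ≤
        Module.finrank ℝ (EuclideanSpace ℝ (Fin d)) := Submodule.finrank_le _
    have h2 : Module.finrank ℝ (EuclideanSpace ℝ (Fin d)) = d := finrank_euclideanSpace_fin
    omega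
  -- weights
  rw [Finset.convexHull_eq] at h0t
  obtain ⟨w, hw0, hw1, hwc⟩ := h0t
  rw [Finset.centerMass_eq_of_sum_1 _ _ hw1] at hwc
  simp only [id] at hwc
  set t' : Finset (EuclideanSpace ℝ (Fin d)) := t.filter (fun x => 0 < w x) with ht'
  have hsub : t' ⊆ t := Finset.filter_subset _ _
  have hsum' : ∑ x ∈ t', w x • x = 0 := by
    rw [← hwc]
    apply Finset.sum_subset hsub
    intro x hx hx'
    have hw : w x = 0 := by
      rcases (hw0 x hx).lt_or_eq with hlt | heq
      · exact absurd (Finset.mem_filter.2 ⟨hx, hlt⟩) hx'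
      · exact heq.symm
    simp [hw]
  have ht'ne : t'.Nonempty := by
    by_contra h
    rw [Finset.not_nonempty_iff_eq_empty] at h
    have hz : ∑ y ∈ t, w y = 0 := by
      apply Finset.sum_eq_zero
      intro y hy
      rcases (hw0 y hy).lt_or_eq with hlt | heq
      · have hmem : y ∈ Finset.filter (fun x => 0 < w x) t := Finset.mem_filter.2 ⟨hy, hlt⟩
        rw [← ht', h] at hmem
        exact absurd hmem (Finset.notMem_empty y)
      · exact heq.symm
    rw [hw1] at hz; norm_num at hz
  -- choose indices
  have hchoice : ∀ x ∈ t', ∃ i : ℤ, bisector p i = x := by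
    intro x hx
    exact hts (hsub hx)
  choose idx hidx using fun x (hx : x ∈ t') => hchoice x hx
  set S : Finset (EuclideanSpace ℝ (Fin d)) :=
    t'.attach.image (fun x => p (idx x.1 x.2)) with hS
  refine ⟨S, ?_, ?_, ?_⟩
  · calc S.card ≤ t'.attach.card := Finset.card_image_le
      _ = t'.card := Finset.card_attach
      _ ≤ t.card := Finset.card_le_card hsub
      _ ≤ d + 1 := hcard
  · intro x hx
    simp only [hS, Finset.coe_image, Set.mem_image] at hx
    obtain ⟨y, _, rfl⟩ := hx
    exact ⟨_, rfl⟩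
  · rintro ⟨tr, htr⟩
    have hpos : ∀ x ∈ t', 0 < ⟪x, tr⟫ := by
      intro x hx
      have hmem : p (idx x hx) ∈ S := by
        rw [hS]
        exact Finset.mem_image.2 ⟨⟨x, hx⟩, Finset.mem_attach _ _, rfl⟩
      have hint := htr _ hmem
      obtain ⟨_, hbne, hsupp⟩ := hvert (idx x hx)
      have hst := strict_support hbne hsupp hint
      rwa [add_sub_cancel_right, hidx x hx] at hst
    have h1 : ⟪∑ x ∈ t', w x • x, tr⟫ = ∑ x ∈ t', w x * ⟪x, tr⟫ := by
      rw [sum_inner]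
      exact Finset.sum_congr rfl fun x _ => real_inner_smul_left x tr (w x)
    rw [hsum'] at h1
    simp only [inner_zero_left] at h1
    have h2 : 0 < ∑ x ∈ t', w x * ⟪x, tr⟫ := by
      apply Finset.sum_pos
      · intro x hx
        exact mul_pos (Finset.mem_filter.1 hx).2 (hpos x hx)
      · exact ht'ne
    rw [← h1] at h2
    exact lt_irrefl _ h2
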